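/- Let f : ℝⁿ → ℝ be locally Lipschitz and upper-C¹ at x, meaning −f is approximately convex at x. Then for all sequences x_j → x, y_j → x there exist ε_j → 0⁺ such that f(y_j) ≤ f(x_j) + f⁰(x_j, y_j − x_j) + ε_j‖y_j − x_j‖, i.e., the standard oracle plane m♯_{y_j}(·,x_j) = f(x_j) + g_jᵀ(·−x_j) with g_j ∈ ∂f(x_j) attaining g_jᵀ(y_j−x_j) = f⁰(x_j, y_j−x_j) satisfies f(y_j) ≤ m♯_{y_j}(y_j,x_j) + ε_j‖y_j − x_j‖. -/

import Mathlib

open Metric Set Filter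
open scoped Topology RealInnerProductSpace

/-- The Clarke directional derivative of `f` at `x` in direction `d`. -/
noncomputable def clarkeDeriv {E : Type*} [NormedAddCommGroup E] [NormedSpace ℝ E]
    (f : E → ℝ) (x d : E) : ℝ :=
  Filter.limsup (fun p : E × ℝ => (f (p.1 + p.2 • d) - f p.1) / p.2)
    ((nhds x) ×ˢ (nhdsWithin 0 (Set.Ioi 0)))

lemma clarkeDeriv_zero {E : Type*} [NormedAddCommGroup E] [NormedSpace ℝ E]
    (f : E → ℝ) (z : E) : clarkeDeriv f z 0 = 0 := by
  unfold clarkeDeriv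
  have h : (fun p : E × ℝ => (f (p.1 + p.2 • (0:E)) - f p.1) / p.2) = fun _ => (0:ℝ) := by
    funext p; simp
  rw [h, limsup_const]

lemma key {E : Type*} [NormedAddCommGroup E] [NormedSpace ℝ E]
    (f : E → ℝ) (x : E) (K : NNReal) (r : ℝ) (hr : 0 < r)
    (hLip : LipschitzOnWith K f (ball x r)) (ε δ : ℝ) (hε : 0 < ε)
    (h : ∀ t ∈ Ioo (0:ℝ) 1, ∀ y ∈ ball x δ, ∀ z ∈ ball x δ,
      f y ≤ f z + t⁻¹ * (f (z + t • (y - z)) - f z) + ε * (1 - t) * ‖z - y‖)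
    (y z : E) (hy : y ∈ ball x (min δ (r/2))) (hz : z ∈ ball x (min δ (r/2))) :
    f y - f z - ε * ‖z - y‖ ≤ clarkeDeriv f z (y - z) := by
  set d := y - z with hd
  have hzr : z ∈ ball x (r/2) := mem_of_mem_of_subset hz (ball_subset_ball (min_le_right _ _))
  have hzδ : z ∈ ball x δ := mem_of_mem_of_subset hz (ball_subset_ball (min_le_left _ _))
  have hyδ : y ∈ ball x δ := mem_of_mem_of_subset hy (ball_subset_ball (min_le_left _ _))
  set s : ℝ := (r/2) / (‖d‖ + 1) with hs
  have hdpos : (0:ℝ) < ‖d‖ + 1 := by positivity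
  have hspos : 0 < s := by positivity
  have hbdd : IsBoundedUnder (· ≤ ·) ((𝓝 z) ×ˢ (𝓝[>] (0:ℝ)))
      (fun p : E × ℝ => (f (p.1 + p.2 • d) - f p.1) / p.2) := by
    refine ⟨(K : ℝ) * ‖d‖, eventually_map.mpr ?_⟩
    have h1 : ball x (r/2) ∈ 𝓝 z := isOpen_ball.mem_nhds hzr
    have h2 : Ioo (0:ℝ) s ∈ 𝓝[>] (0:ℝ) :=
      Ioo_mem_nhdsGT_of_mem ⟨le_refl _, hspos⟩
    filter_upwards [Filter.prod_mem_prod h1 h2] with p hp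
    obtain ⟨hp1, hp2⟩ := hp
    have ht : 0 < p.2 := hp2.1
    have hmem : p.1 + p.2 • d ∈ ball x r := by
      have : ‖p.1 + p.2 • d - x‖ ≤ ‖p.1 - x‖ + p.2 * ‖d‖ := by
        calc ‖p.1 + p.2 • d - x‖ = ‖(p.1 - x) + p.2 • d‖ := by rw [add_sub_right_comm]
          _ ≤ ‖p.1 - x‖ + ‖p.2 • d‖ := norm_add_le _ _
          _ = ‖p.1 - x‖ + p.2 * ‖d‖ := by rw [norm_smul, Real.norm_of_nonneg ht.le]
      have hb : ‖p.1 - x‖ < r/2 := mem_ball_iff_norm.mp hp1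
      have hsd : p.2 * ‖d‖ ≤ r/2 := by
        have : p.2 * ‖d‖ ≤ s * ‖d‖ := mul_le_mul_of_nonneg_right hp2.2.le (norm_nonneg _)
        have h3 : s * ‖d‖ ≤ r/2 := by
          rw [hs, div_mul_eq_mul_div, div_le_iff₀ hdpos]
          nlinarith [norm_nonneg d]
        linarith
      rw [mem_ball_iff_norm]
      linarith
    have hp1r : p.1 ∈ ball x r := mem_of_mem_of_subset hp1 (ball_subset_ball (by linarith))
    have hl := hLip.dist_le_mul _ hmem _ hp1r
    rw [Real.dist_eq, dist_eq_norm, add_sub_cancel_left, norm_smul,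
      Real.norm_of_nonneg ht.le] at hl
    have : f (p.1 + p.2 • d) - f p.1 ≤ (K:ℝ) * (p.2 * ‖d‖) :=
      le_trans (le_abs_self _) hl
    rw [div_le_iff₀ ht]
    nlinarith
  have hfreq : ∃ᶠ p in (𝓝 z) ×ˢ (𝓝[>] (0:ℝ)),
      f y - f z - ε * ‖z - y‖ ≤ (f (p.1 + p.2 • d) - f p.1) / p.2 := by
    have hle : (pure z : Filter E) ×ˢ (𝓝[>] (0:ℝ)) ≤ (𝓝 z) ×ˢ (𝓝[>] (0:ℝ)) :=
      Filter.prod_mono (pure_le_nhds z) le_rfl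
    refine Filter.Frequently.filter_mono ?_ hle
    apply Filter.Eventually.frequently
    have hIoo : Ioo (0:ℝ) 1 ∈ 𝓝[>] (0:ℝ) := Ioo_mem_nhdsGT_of_mem ⟨le_refl _, one_pos⟩
    have hev1 : ∀ᶠ a in (pure z : Filter E), a = z := eventually_pure.mpr rfl
    have hev : ∀ᶠ p in (pure z : Filter E) ×ˢ (𝓝[>] (0:ℝ)), p.1 = z ∧ p.2 ∈ Ioo (0:ℝ) 1 :=
      Filter.Eventually.prod_mk hev1 (eventually_of_mem hIoo fun t ht => ht)
    filter_upwards [hev] with p hp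
    obtain ⟨hp1, hp2⟩ := hp
    have hy2 := h p.2 hp2 y hyδ z hzδ
    rw [← hd] at hy2
    rw [hp1]
    have hq : (f (z + p.2 • d) - f z) / p.2 = p.2⁻¹ * (f (z + p.2 • d) - f z) := by
      rw [div_eq_inv_mul]
    rw [hq]
    have hεn : ε * (1 - p.2) * ‖z - y‖ ≤ ε * ‖z - y‖ := by
      nlinarith [mul_nonneg (mul_nonneg hε.le hp2.1.le) (norm_nonneg (z - y))]
    linarith [hy2, hεn]
  exact Filter.le_limsup_of_frequently_le hfreq hbdd

theorem stmt_7 (n : ℕ) (f : EuclideanSpace ℝ (Fin n) → ℝ) (hf : LocallyLipschitz f)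
    (x : EuclideanSpace ℝ (Fin n))
    (hupperC1 : ∀ ε > (0:ℝ), ∃ δ > (0:ℝ), ∀ t ∈ Ioo (0:ℝ) 1, ∀ y ∈ ball x δ, ∀ z ∈ ball x δ,
      f y ≤ f z + t⁻¹ * (f (z + t • (y - z)) - f z) + ε * (1 - t) * ‖z - y‖)
    (xj yj : ℕ → EuclideanSpace ℝ (Fin n))
    (hxj : Tendsto xj atTop (𝓝 x)) (hyj : Tendsto yj atTop (𝓝 x))
    (gj : ℕ → EuclideanSpace ℝ (Fin n))
    (hgj : ∀ j, ∀ d, ⟪gj j, d⟫ ≤ clarkeDeriv f (xj j) d)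
    (hattain : ∀ j, ⟪gj j, yj j - xj j⟫ = clarkeDeriv f (xj j) (yj j - xj j)) :
    ∃ εj : ℕ → ℝ, (∀ j, 0 < εj j) ∧ Tendsto εj atTop (𝓝 0) ∧
      (∀ j, f (yj j) ≤ f (xj j) + clarkeDeriv f (xj j) (yj j - xj j) + εj j * ‖yj j - xj j‖) ∧
      (∀ j, f (yj j) ≤ f (xj j) + ⟪gj j, yj j - xj j⟫ + εj j * ‖yj j - xj j‖) := by
  obtain ⟨K, t, htmem, hLipt⟩ := hf x
  obtain ⟨r, hr, hball⟩ := Metric.mem_nhds_iff.mp htmem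
  have hLip : LipschitzOnWith K f (ball x r) := hLipt.mono hball
  set A : ℕ → ℝ := fun j => f (yj j) - f (xj j) - clarkeDeriv f (xj j) (yj j - xj j) with hA
  set N : ℕ → ℝ := fun j => ‖yj j - xj j‖ with hN
  have hEv : ∀ ε > (0:ℝ), ∀ᶠ j in atTop, A j ≤ ε * N j := by
    intro ε hε
    obtain ⟨δ, hδ, h⟩ := hupperC1 ε hε
    have hmin : 0 < min δ (r/2) := lt_min hδ (by linarith)
    have hb : ball x (min δ (r/2)) ∈ 𝓝 x := ball_mem_nhds x hmin
    filter_upwards [hxj.eventually_mem hb, hyj.eventually_mem hb] with j h1 h2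
    have hkey := key f x K r hr hLip ε δ hε h (yj j) (xj j) h2 h1
    have hnorm : ‖xj j - yj j‖ = ‖yj j - xj j‖ := norm_sub_rev _ _
    rw [hnorm] at hkey
    simp only [hA, hN]
    linarith
  have hAzero : ∀ j, N j = 0 → A j = 0 := by
    intro j hj
    have h0 : yj j - xj j = 0 := norm_eq_zero.mp hj
    have hyx : yj j = xj j := sub_eq_zero.mp h0
    simp only [hA, h0, hyx, clarkeDeriv_zero, sub_zero, sub_self]
  refine ⟨fun j => max (A j / N j) 0 + 1/(j+1:ℝ), fun j => ?_, ?_, ?_, ?_⟩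
  · exact add_pos_of_nonneg_of_pos (le_max_right _ _) (by positivity)
  · have hmax : Tendsto (fun j => max (A j / N j) 0) atTop (𝓝 0) := by
      rw [NormedAddCommGroup.tendsto_nhds_zero]
      intro ε hε
      filter_upwards [hEv (ε/2) (by linarith)] with j hj
      have hmle : max (A j / N j) 0 ≤ ε/2 := by
        rcases eq_or_lt_of_le (norm_nonneg (yj j - xj j)) with h0 | hpos
        · have hz : A j = 0 := hAzero j h0.symm
          simp only [hz, zero_div, max_self]
          linarith
        · have hdiv : A j / N j ≤ ε/2 := by
            rw [div_le_iff₀ hpos]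
            linarith [hj, mul_comm (ε/2) (N j)]
          exact max_le hdiv (by linarith)
      have hnn : (0:ℝ) ≤ max (A j / N j) 0 := le_max_right _ _
      rw [Real.norm_of_nonneg hnn]
      linarith
    have h1j : Tendsto (fun j : ℕ => 1/(j+1:ℝ)) atTop (𝓝 0) :=
      tendsto_one_div_add_atTop_nhds_zero_nat
    simpa using hmax.add h1j
  · intro j
    rcases eq_or_lt_of_le (norm_nonneg (yj j - xj j)) with h0 | hpos
    · have hA0 : A j = 0 := hAzero j h0.symm
      simp only [hA] at hA0
      rw [← h0]
      linarith
    · have hNj : 0 < N j := hpos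
      have h2 : A j / N j ≤ max (A j / N j) 0 + 1/(j+1:ℝ) := by
        have := le_max_left (A j / N j) 0
        have h3 : (0:ℝ) < 1/(j+1:ℝ) := by positivity
        linarith
      have hle := mul_le_mul_of_nonneg_right h2 hNj.le
      rw [div_mul_cancel₀ _ hNj.ne'] at hle
      simp only [hA, hN] at hle
      linarith
  · intro j
    rw [hattain j]
    rcases eq_or_lt_of_le (norm_nonneg (yj j - xj j)) with h0 | hpos
    · have hA0 : A j = 0 := hAzero j h0.symm
      simp only [hA] at hA0
      rw [← h0]
      linarith
    · have hNj : 0 < N j := hpos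
      have h2 : A j / N j ≤ max (A j / N j) 0 + 1/(j+1:ℝ) := by
        have := le_max_left (A j / N j) 0
        have h3 : (0:ℝ) < 1/(j+1:ℝ) := by positivity
        linarith
      have hle := mul_le_mul_of_nonneg_right h2 hNj.le
      rw [div_mul_cancel₀ _ hNj.ne'] at hle
      simp only [hA, hN] at hle
      linarith
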